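/- arXiv:2210.03862 — 4 statements merged into one kernel-verified Lean document; each statement's English description precedes it below -/
import Mathlib

section
/- (Choi's Theorem) Let φ : Mₙ(ℂ) → M_k(ℂ) be a completely positive linear map. Then there exist matrices a₁, …, a_{nk} ∈ M_{n,k}(ℂ) (n×k complex matrices) such that φ(x) = Σ_{i=1}^{nk} aᵢ* x aᵢ for all x ∈ Mₙ(ℂ), where aᵢ* denotes the conjugate transpose. -/
open scoped ComplexOrder
open Matrix

/-- The `m`-th amplification `id_{Mₘ} ⊗ φ` of a map between complex matrix algebras,
acting blockwise on `Mₘ(Mₙ(ℂ)) ≅ M_{mn}(ℂ)`. -/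
def matAmp {n k : ℕ} (m : ℕ) (φ : Matrix (Fin n) (Fin n) ℂ → Matrix (Fin k) (Fin k) ℂ)
    (x : Matrix (Fin m × Fin n) (Fin m × Fin n) ℂ) : Matrix (Fin m × Fin k) (Fin m × Fin k) ℂ :=
  Matrix.of fun ip jq => φ (Matrix.of fun p q => x (ip.1, p) (jq.1, q)) ip.2 jq.2

/-- Complete positivity for a map between complex matrix algebras: every amplification
sends positive semidefinite matrices to positive semidefinite matrices. -/
def IsCompletelyPositiveMat {n k : ℕ}
    (φ : Matrix (Fin n) (Fin n) ℂ → Matrix (Fin k) (Fin k) ℂ) : Prop :=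
  ∀ (m : ℕ) (x : Matrix (Fin m × Fin n) (Fin m × Fin n) ℂ),
    x.PosSemidef → (matAmp m φ x).PosSemidef

/-- Choi's theorem: every completely positive map `φ : Mₙ(ℂ) → M_k(ℂ)` has a
Kraus decomposition `φ(x) = Σ_{i=1}^{nk} aᵢ* x aᵢ` with `aᵢ ∈ M_{n,k}(ℂ)`. -/
theorem stmt_5 {n k : ℕ} (φ : Matrix (Fin n) (Fin n) ℂ →ₗ[ℂ] Matrix (Fin k) (Fin k) ℂ)
    (hφ : IsCompletelyPositiveMat (⇑φ)) :
    ∃ a : Fin (n * k) → Matrix (Fin n) (Fin k) ℂ,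
      ∀ x, φ x = ∑ i, (a i).conjTranspose * x * a i := by
  classical
  set M : Matrix (Fin 1) (Fin n × Fin n) ℂ :=
    Matrix.of fun _ ip => if ip.1 = ip.2 then 1 else 0 with hM
  have hE : (M.conjTranspose * M).PosSemidef := Matrix.posSemidef_conjTranspose_mul_self M
  have hC : (matAmp n (⇑φ) (M.conjTranspose * M)).PosSemidef := hφ n _ hE
  obtain ⟨B, hB⟩ : ∃ B : Matrix (Fin n × Fin k) (Fin n × Fin k) ℂ,
      matAmp n (⇑φ) (M.conjTranspose * M) = B.conjTranspose * B := by
    open scoped MatrixOrder in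
    have hC' : 0 ≤ matAmp n (⇑φ) (M.conjTranspose * M) := Matrix.nonneg_iff_posSemidef.mpr hC
    open scoped MatrixOrder in
    obtain ⟨X, hX, -, hXe⟩ := CFC.exists_sqrt_of_isSelfAdjoint_of_quasispectrumRestricts
      (IsSelfAdjoint.of_nonneg hC') (QuasispectrumRestricts.nnreal_of_nonneg hC')
    exact ⟨X, by rw [← hXe]; exact congrArg (· * X) hX.star_eq.symm⟩
  set a : Fin (n * k) → Matrix (Fin n) (Fin k) ℂ :=
    fun r => Matrix.of fun i s => B (finProdFinEquiv.symm r) (i, s) with ha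
  refine ⟨a, fun x => ?_⟩
  have key : ∀ (i j : Fin n) (s t : Fin k),
      φ (Matrix.single i j (1 : ℂ)) s t
        = ∑ u : Fin n × Fin k, (starRingEnd ℂ) (B u (i, s)) * B u (j, t) := by
    intro i j s t
    have h1 : (Matrix.of fun p q => (M.conjTranspose * M) (i, p) (j, q))
        = Matrix.single i j (1 : ℂ) := by
      ext p q
      simp only [Matrix.mul_apply, hM, Matrix.of_apply, Matrix.conjTranspose_apply,
        Matrix.single, ite_and, Fin.sum_univ_one]
      split_ifs <;> simp_all
    have h2 := congrFun (congrFun hB (i, s)) (j, t)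
    simp only [matAmp, Matrix.of_apply, h1] at h2
    rw [h2, Matrix.mul_apply]
    simp [Matrix.conjTranspose_apply]
  ext s t
  have lhs : φ x s t = ∑ u : Fin n × Fin k, ∑ j, ∑ i,
      x i j * ((starRingEnd ℂ) (B u (i, s)) * B u (j, t)) := by
    conv_lhs => rw [Matrix.matrix_eq_sum_single x]
    rw [map_sum, Matrix.sum_apply]
    have step : ∀ i j : Fin n, φ (Matrix.single i j (x i j)) s t
        = ∑ u : Fin n × Fin k, x i j * ((starRingEnd ℂ) (B u (i, s)) * B u (j, t)) := by
      intro i j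
      have : Matrix.single i j (x i j) = x i j • Matrix.single i j (1 : ℂ) := by
        rw [Matrix.smul_single, smul_eq_mul, mul_one]
      rw [this, _root_.map_smul, Matrix.smul_apply, smul_eq_mul, key, Finset.mul_sum]
    calc (∑ i, φ (∑ j, Matrix.single i j (x i j)) s t)
        = ∑ i, ∑ j, ∑ u : Fin n × Fin k,
            x i j * ((starRingEnd ℂ) (B u (i, s)) * B u (j, t)) := by
          refine Finset.sum_congr rfl fun i _ => ?_
          rw [map_sum, Matrix.sum_apply]
          exact Finset.sum_congr rfl fun j _ => step i j
      _ = ∑ i, ∑ u : Fin n × Fin k, ∑ j,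
            x i j * ((starRingEnd ℂ) (B u (i, s)) * B u (j, t)) :=
          Finset.sum_congr rfl fun i _ => Finset.sum_comm
      _ = ∑ u : Fin n × Fin k, ∑ i, ∑ j,
            x i j * ((starRingEnd ℂ) (B u (i, s)) * B u (j, t)) := Finset.sum_comm
      _ = ∑ u : Fin n × Fin k, ∑ j, ∑ i,
            x i j * ((starRingEnd ℂ) (B u (i, s)) * B u (j, t)) :=
          Finset.sum_congr rfl fun u _ => Finset.sum_comm
  rw [lhs, Matrix.sum_apply]
  rw [show (∑ r : Fin (n * k),
      ((a r).conjTranspose * x * a r) s t)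
      = ∑ u : Fin n × Fin k,
          ((Matrix.of fun i s => B u (i, s)).conjTranspose * x *
            (Matrix.of fun i s => B u (i, s))) s t from
      (Equiv.sum_comp finProdFinEquiv.symm fun u =>
        ((Matrix.of fun i s => B u (i, s)).conjTranspose * x *
          (Matrix.of fun i s => B u (i, s))) s t)]
  refine Finset.sum_congr rfl fun u _ => ?_
  rw [Matrix.mul_apply]
  refine Finset.sum_congr rfl fun j _ => ?_
  rw [Matrix.mul_apply, Finset.sum_mul]
  refine Finset.sum_congr rfl fun i _ => ?_
  simp only [Matrix.conjTranspose_apply, Matrix.of_apply, ← starRingEnd_apply]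
  ring
end

section
/- Let A be a unital C*-algebra, x₁, …, xₙ ∈ A, and λ₁, …, λₙ ∈ ℂ. Set x₀ = 1, λ₀ = 1, and x_{−i} = xᵢ*, λ_{−i} = conj(λᵢ) for i = 1, …, n. Then the following are equivalent: (i) for all complex numbers a_{−n}, …, a₀, …, aₙ with |aᵢ| ≤ 1 for each i, one has |Σ_{i=−n}^{n} aᵢ λᵢ| ≤ ‖Σ_{i=−n}^{n} aᵢ xᵢ‖; (ii) there exists a state φ on A with φ(xᵢ) = λᵢ for all i = 1, …, n. -/
open scoped ComplexOrder

namespace Stmt13Aux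

open Complex

variable {A : Type*} [CStarAlgebra A]

section order

variable [PartialOrder A] [StarOrderedRing A]

lemma exists_star_mul_self {z : A} (hz : 0 ≤ z) : ∃ w, z = star w * w := by
  refine ⟨CFC.sqrt z, ?_⟩
  rw [(IsSelfAdjoint.of_nonneg (CFC.sqrt_nonneg z)).star_eq, CFC.sqrt_mul_sqrt_self z hz]

variable (φ : A →ₗ[ℂ] ℂ)

lemma map_algebraMap (h1 : φ 1 = 1) (r : ℝ) : φ (algebraMap ℝ A r) = r := by
  rw [IsScalarTower.algebraMap_apply ℝ ℂ A, Algebra.algebraMap_eq_smul_one, map_smul, h1]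
  simp

lemma pos_of_pos (hpos : ∀ z : A, (∃ w : A, z = star w * w) → 0 ≤ φ z)
    {z : A} (hz : 0 ≤ z) : 0 ≤ φ z :=
  hpos z (exists_star_mul_self hz)

lemma im_eq_zero (h1 : φ 1 = 1) (hpos : ∀ z : A, (∃ w : A, z = star w * w) → 0 ≤ φ z)
    {y : A} (hy : IsSelfAdjoint y) : (φ y).im = 0 := by
  have hy' : 0 ≤ y + algebraMap ℝ A ‖y‖ := by
    have := add_le_add_left hy.neg_algebraMap_norm_le_self (algebraMap ℝ A ‖y‖)
    simpa using this
  have h := pos_of_pos φ hpos hy'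
  rw [Complex.le_def] at h
  have h2 := h.2
  rw [map_add, map_algebraMap φ h1] at h2
  simpa using h2.symm

lemma re_le_norm (h1 : φ 1 = 1) (hpos : ∀ z : A, (∃ w : A, z = star w * w) → 0 ≤ φ z)
    {y : A} (hy : IsSelfAdjoint y) : (φ y).re ≤ ‖y‖ := by
  have hy' : 0 ≤ algebraMap ℝ A ‖y‖ - y := sub_nonneg.mpr hy.le_algebraMap_norm_self
  have h := pos_of_pos φ hpos hy'
  rw [Complex.le_def] at h
  have h2 := h.1
  rw [map_sub, map_algebraMap φ h1] at h2
  simpa using h2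

lemma map_star_eq (h1 : φ 1 = 1) (hpos : ∀ z : A, (∃ w : A, z = star w * w) → 0 ≤ φ z)
    (z : A) : φ (star z) = starRingEnd ℂ (φ z) := by
  set c : A := (2 : ℂ)⁻¹ • (z + star z) with hc_def
  set d : A := (-(2 : ℂ)⁻¹ * Complex.I) • (z - star z) with hd_def
  have hc : IsSelfAdjoint c := by
    rw [hc_def, IsSelfAdjoint, star_smul, star_add, star_star, add_comm]
    congr 1
    simp [Complex.ext_iff]
  have hd : IsSelfAdjoint d := by
    rw [hd_def, IsSelfAdjoint, star_smul, star_sub, star_star]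
    match_scalars <;> simp [Complex.ext_iff] <;> ring
  have hz : z = c + Complex.I • d := by
    rw [hc_def, hd_def, smul_smul]
    match_scalars <;> simp [Complex.ext_iff] <;> ring
  have hzs : star z = c - Complex.I • d := by
    rw [hc_def, hd_def, smul_smul]
    match_scalars <;> simp [Complex.ext_iff] <;> ring
  have hcre : (starRingEnd ℂ) (φ c) = φ c :=
    Complex.conj_eq_iff_im.mpr (im_eq_zero φ h1 hpos hc)
  have hdre : (starRingEnd ℂ) (φ d) = φ d :=
    Complex.conj_eq_iff_im.mpr (im_eq_zero φ h1 hpos hd)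
  obtain ⟨p, hp⟩ : ∃ p, φ c = p := ⟨_, rfl⟩
  obtain ⟨q, hq⟩ : ∃ q, φ d = q := ⟨_, rfl⟩
  rw [hp] at hcre
  rw [hq] at hdre
  rw [hzs, map_sub, hp, map_smul, hq, smul_eq_mul]
  conv_rhs => rw [hz, map_add, hp, map_smul, hq, smul_eq_mul]
  rw [map_add, map_mul, hcre, hdre, Complex.conj_I]
  ring

lemma norm_map_le (h1 : φ 1 = 1) (hpos : ∀ z : A, (∃ w : A, z = star w * w) → 0 ≤ φ z)
    (z : A) : ‖φ z‖ ≤ ‖z‖ := by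
  rcases eq_or_ne (φ z) 0 with h0 | h0
  · simp [h0]
  · set s : ℂ := (starRingEnd ℂ) (φ z) / ‖φ z‖ with hs_def
    have hs_norm : ‖s‖ = 1 := by
      have hconj : ‖(starRingEnd ℂ) (φ z)‖ = ‖φ z‖ := RCLike.norm_conj _
      rw [hs_def, norm_div, hconj, Complex.norm_real, norm_norm,
        div_self (norm_ne_zero_iff.mpr h0)]
    set u : A := s • z with hu_def
    have hu_norm : ‖u‖ = ‖z‖ := by rw [hu_def, norm_smul, hs_norm, one_mul]
    have hφu : φ u = (‖φ z‖ : ℂ) := by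
      have hmc : (starRingEnd ℂ) (φ z) * φ z = ((‖φ z‖ : ℝ) : ℂ) ^ 2 := by
        rw [mul_comm, Complex.mul_conj, Complex.normSq_eq_norm_sq]
        push_cast
        ring
      rw [hu_def, map_smul, smul_eq_mul, hs_def, div_mul_eq_mul_div, hmc, sq,
        mul_div_assoc, div_self (by exact_mod_cast norm_ne_zero_iff.mpr h0), mul_one]
    have hu_norm2 : ‖u‖ = ‖z‖ := hu_norm
    have hsum : φ (u + star u) = 2 * ((‖φ z‖ : ℝ) : ℂ) := by
      rw [map_add, map_star_eq φ h1 hpos, hφu, Complex.conj_ofReal]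
      ring
    have hsa : IsSelfAdjoint (u + star u) := IsSelfAdjoint.add_star_self u
    have hle := re_le_norm φ h1 hpos hsa
    rw [hsum] at hle
    simp only [Complex.mul_re, Complex.ofReal_re, Complex.ofReal_im] at hle
    have hb : ‖u + star u‖ ≤ 2 * ‖z‖ := by
      calc ‖u + star u‖ ≤ ‖u‖ + ‖star u‖ := norm_add_le _ _
        _ = 2 * ‖z‖ := by rw [norm_star, hu_norm]; ring
    norm_num at hle
    linarith

lemma pos_of_norm_le_one [Nontrivial A] (φ : A →L[ℂ] ℂ) (h1 : φ 1 = 1) (hφ : ‖φ‖ ≤ 1)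
    (w : A) : 0 ≤ φ (star w * w) := by
  set z : A := star w * w with hz_def
  have hz : 0 ≤ z := star_mul_self_nonneg w
  have hsa : IsSelfAdjoint z := IsSelfAdjoint.star_mul_self w
  have hφle : ∀ y : A, ‖φ y‖ ≤ ‖y‖ := fun y =>
    (φ.le_opNorm y).trans (mul_le_of_le_one_left (norm_nonneg y) hφ)
  have key : ∀ t : ℝ, ((φ z).im + t) ^ 2 ≤ ‖z‖ ^ 2 + t ^ 2 := by
    intro t
    set e : A := z + ((t : ℂ) * Complex.I) • 1 with he_def
    have hφe : φ e = φ z + (t : ℂ) * Complex.I := by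
      rw [he_def, map_add, map_smul, h1, smul_eq_mul, mul_one]
    have hse : star e * e = z * z + (((t : ℝ) ^ 2 : ℝ) : ℂ) • 1 := by
      rw [he_def, star_add, hsa.star_eq, star_smul, star_one]
      rw [show star ((t : ℂ) * Complex.I) = -((t : ℂ) * Complex.I) by
        simp [Complex.ext_iff]]
      simp only [add_mul, mul_add, smul_mul_assoc, mul_smul_comm, mul_one, one_mul,
        smul_smul]
      match_scalars <;> simp [Complex.ext_iff, pow_two] <;> ring
    have hzz : ‖z * z‖ = ‖z‖ ^ 2 := by
      have hss : star z * z = z * z := by rw [hsa.star_eq]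
      rw [← hss, CStarRing.norm_star_mul_self, sq]
    have hsmul1 : ‖(((t : ℝ) ^ 2 : ℝ) : ℂ) • (1 : A)‖ = t ^ 2 := by
      rw [norm_smul, norm_one, mul_one, Complex.norm_real, Real.norm_of_nonneg (sq_nonneg t)]
    have hnorm_e : ‖e‖ ^ 2 ≤ ‖z‖ ^ 2 + t ^ 2 := by
      have h1' : ‖e‖ * ‖e‖ = ‖star e * e‖ := (CStarRing.norm_star_mul_self).symm
      have h2' : ‖star e * e‖ ≤ ‖z‖ ^ 2 + t ^ 2 := by
        rw [hse]
        refine (norm_add_le _ _).trans ?_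
        rw [hzz, hsmul1]
      calc ‖e‖ ^ 2 = ‖e‖ * ‖e‖ := sq ‖e‖
        _ = ‖star e * e‖ := h1'
        _ ≤ ‖z‖ ^ 2 + t ^ 2 := h2'
    have hlhs : ((φ z).im + t) ^ 2 ≤ ‖φ e‖ ^ 2 := by
      have he2 : ‖φ e‖ ^ 2 = (φ z).re ^ 2 + ((φ z).im + t) ^ 2 := by
        rw [hφe, Complex.sq_norm, Complex.normSq_apply]
        simp [Complex.add_re, Complex.add_im]
        ring
      nlinarith [sq_nonneg (φ z).re]
    have hfe := hφle e
    nlinarith [norm_nonneg (φ e), norm_nonneg e]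
  have him : (φ z).im = 0 := by
    by_contra him
    have h2 := key ((‖z‖ ^ 2 + 1) / (2 * (φ z).im))
    have h3 : (φ z).im * ((‖z‖ ^ 2 + 1) / (2 * (φ z).im)) = (‖z‖ ^ 2 + 1) / 2 := by
      field_simp
    nlinarith [sq_nonneg (φ z).im]
  have hre : 0 ≤ (φ z).re := by
    set c : A := algebraMap ℝ A ‖z‖ - z with hc_def
    have hc0 : 0 ≤ c := sub_nonneg.mpr hsa.le_algebraMap_norm_self
    have hcle : c ≤ algebraMap ℝ A ‖z‖ := by rw [hc_def]; exact sub_le_self _ hz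
    have hnc : ‖c‖ ≤ ‖z‖ := by
      refine (CStarAlgebra.norm_le_norm_of_nonneg_of_le hc0 hcle).trans ?_
      rw [norm_algebraMap', norm_norm]
    have hφc : φ c = ((‖z‖ : ℝ) : ℂ) - φ z := by
      rw [hc_def, map_sub, IsScalarTower.algebraMap_apply ℝ ℂ A,
        Algebra.algebraMap_eq_smul_one, map_smul, h1, smul_eq_mul, mul_one,
        Complex.coe_algebraMap]
    have hb := (hφle c).trans hnc
    rw [hφc] at hb
    have h4 : |((((‖z‖ : ℝ) : ℂ)) - φ z).re| ≤ ‖(((‖z‖ : ℝ) : ℂ)) - φ z‖ := by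
      exact Complex.abs_re_le_norm _
    rw [Complex.sub_re, Complex.ofReal_re] at h4
    have h5 := (abs_le.mp (h4.trans hb)).2
    linarith
  rw [Complex.le_def]
  exact ⟨by simpa using hre, by simpa using him.symm⟩

end order

/-- The evaluation map `(a₀, a, b) ↦ a₀ • 1 + ∑ aᵢ • xᵢ + ∑ bᵢ • xᵢ*`. -/
noncomputable def Tmap {n : ℕ} (x : Fin n → A) :
    (ℂ × (Fin n → ℂ) × (Fin n → ℂ)) →ₗ[ℂ] A where
  toFun v := v.1 • (1 : A) + ∑ i, v.2.1 i • x i + ∑ i, v.2.2 i • star (x i)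
  map_add' v w := by
    simp only [Prod.fst_add, Prod.snd_add, Pi.add_apply, add_smul, Finset.sum_add_distrib]
    abel
  map_smul' c v := by
    simp only [Prod.smul_fst, Prod.smul_snd, Pi.smul_apply, smul_eq_mul, mul_smul,
      RingHom.id_apply, smul_add, Finset.smul_sum]

/-- The scalar counterpart `(a₀, a, b) ↦ a₀ + ∑ aᵢ lᵢ + ∑ bᵢ conj lᵢ`. -/
noncomputable def Smap {n : ℕ} (l : Fin n → ℂ) : (ℂ × (Fin n → ℂ) × (Fin n → ℂ)) →ₗ[ℂ] ℂ where
  toFun v := v.1 + ∑ i, v.2.1 i * l i + ∑ i, v.2.2 i * (starRingEnd ℂ) (l i)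
  map_add' v w := by
    simp only [Prod.fst_add, Prod.snd_add, Pi.add_apply, add_mul, Finset.sum_add_distrib]
    ring
  map_smul' c v := by
    simp only [Prod.smul_fst, Prod.smul_snd, Pi.smul_apply, smul_eq_mul, RingHom.id_apply,
      Finset.mul_sum, mul_assoc, mul_add]

end Stmt13Aux

/-- given `x₁, …, xₙ` in a unital C*-algebra `A` and scalars `λ₁, …, λₙ`,
the norm condition `|a₀ + Σ aᵢλᵢ + Σ bᵢ conj(λᵢ)| ≤ ‖a₀·1 + Σ aᵢxᵢ + Σ bᵢxᵢ*‖` for all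
coefficients in the closed unit disk holds if and only if there is a state `φ` on `A` with
`φ(xᵢ) = λᵢ` for all `i`.  (A state is a unital linear functional sending positive
elements, i.e. elements of the form `w* w`, to nonnegative reals.) -/
theorem stmt_13 {A : Type*} [CStarAlgebra A] {n : ℕ} (x : Fin n → A) (l : Fin n → ℂ) :
    (∀ (a₀ : ℂ) (a b : Fin n → ℂ), ‖a₀‖ ≤ 1 → (∀ i, ‖a i‖ ≤ 1) → (∀ i, ‖b i‖ ≤ 1) →
      ‖a₀ + ∑ i, a i * l i + ∑ i, b i * (starRingEnd ℂ) (l i)‖ ≤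
        ‖a₀ • (1 : A) + ∑ i, a i • x i + ∑ i, b i • star (x i)‖) ↔
    (∃ φ : A →ₗ[ℂ] ℂ, φ 1 = 1 ∧ (∀ z : A, (∃ w : A, z = star w * w) → 0 ≤ φ z) ∧
      ∀ i, φ (x i) = l i) := by
  rcases subsingleton_or_nontrivial A with hA | hA
  · refine iff_of_false ?_ ?_
    · intro h
      have h1 : (1 : A) = 0 := Subsingleton.elim _ _
      have := h 1 0 0 (by norm_num) (fun i => by norm_num) (fun i => by norm_num)
      simp [h1] at this
      linarith
    · rintro ⟨φ, hφ1, -, -⟩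
      have h1 : (1 : A) = 0 := Subsingleton.elim _ _
      rw [h1, map_zero] at hφ1
      exact one_ne_zero hφ1.symm
  constructor
  · intro h
    letI := CStarAlgebra.spectralOrder A
    haveI := CStarAlgebra.spectralOrderedRing A
    have key : ∀ v : ℂ × (Fin n → ℂ) × (Fin n → ℂ),
        ‖Stmt13Aux.Smap l v‖ ≤ ‖Stmt13Aux.Tmap x v‖ := by
      rintro ⟨a₀, a, b⟩
      set cR : ℝ := ‖a₀‖ + (∑ i, ‖a i‖) + (∑ i, ‖b i‖) + 1 with hc_def
      have hsa : (0 : ℝ) ≤ ∑ i, ‖a i‖ := Finset.sum_nonneg fun i _ => norm_nonneg _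
      have hsb : (0 : ℝ) ≤ ∑ i, ‖b i‖ := Finset.sum_nonneg fun i _ => norm_nonneg _
      have hc_pos : 0 < cR := by positivity
      have hnorm_c : ‖(cR : ℂ)‖ = cR := by
        rw [Complex.norm_real, Real.norm_of_nonneg hc_pos.le]
      have ha0 : ‖a₀ / (cR : ℂ)‖ ≤ 1 := by
        rw [norm_div, hnorm_c, div_le_one hc_pos]
        linarith [norm_nonneg a₀]
      have haj : ∀ j, ‖a j / (cR : ℂ)‖ ≤ 1 := fun j => by
        rw [norm_div, hnorm_c, div_le_one hc_pos]
        have := Finset.single_le_sum (f := fun i => ‖a i‖)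
          (fun i _ => norm_nonneg _) (Finset.mem_univ j)
        linarith [norm_nonneg a₀]
      have hbj : ∀ j, ‖b j / (cR : ℂ)‖ ≤ 1 := fun j => by
        rw [norm_div, hnorm_c, div_le_one hc_pos]
        have := Finset.single_le_sum (f := fun i => ‖b i‖)
          (fun i _ => norm_nonneg _) (Finset.mem_univ j)
        linarith [norm_nonneg a₀]
      have happ := h (a₀ / cR) (fun i => a i / cR) (fun i => b i / cR) ha0 haj hbj
      have hLHS : a₀ / (cR : ℂ) + ∑ i, (a i / cR) * l i + ∑ i, (b i / cR) * (starRingEnd ℂ) (l i)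
          = (a₀ + ∑ i, a i * l i + ∑ i, b i * (starRingEnd ℂ) (l i)) / cR := by
        simp only [div_mul_eq_mul_div, ← Finset.sum_div, ← add_div]
      have hsmul : ∀ (v : ℂ) (y : A), (v / (cR : ℂ)) • y = ((cR : ℂ))⁻¹ • (v • y) :=
        fun v y => by rw [div_eq_inv_mul, mul_smul]
      have hRHS : (a₀ / (cR : ℂ)) • (1 : A) + ∑ i, (a i / cR) • x i
            + ∑ i, (b i / cR) • star (x i)
          = ((cR : ℂ))⁻¹ • (a₀ • (1 : A) + ∑ i, a i • x i + ∑ i, b i • star (x i)) := by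
        simp only [hsmul, ← Finset.smul_sum, ← smul_add]
      rw [hLHS, hRHS, norm_div, hnorm_c, norm_smul, norm_inv, hnorm_c] at happ
      have hT : Stmt13Aux.Tmap x ((a₀, a, b) : ℂ × (Fin n → ℂ) × (Fin n → ℂ))
          = a₀ • (1 : A) + ∑ i, a i • x i + ∑ i, b i • star (x i) := rfl
      have hS : Stmt13Aux.Smap l ((a₀, a, b) : ℂ × (Fin n → ℂ) × (Fin n → ℂ))
          = a₀ + ∑ i, a i * l i + ∑ i, b i * (starRingEnd ℂ) (l i) := rfl
      rw [hT, hS]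
      rw [div_le_iff₀ hc_pos] at happ
      calc ‖a₀ + ∑ i, a i * l i + ∑ i, b i * (starRingEnd ℂ) (l i)‖
          ≤ cR⁻¹ * ‖a₀ • (1 : A) + ∑ i, a i • x i + ∑ i, b i • star (x i)‖ * cR := happ
        _ = ‖a₀ • (1 : A) + ∑ i, a i • x i + ∑ i, b i • star (x i)‖ := by
            field_simp
    have hker : LinearMap.ker (Stmt13Aux.Tmap x) ≤ LinearMap.ker (Stmt13Aux.Smap l) := by
      intro v hv
      rw [LinearMap.mem_ker] at hv ⊢
      have := key v
      rw [hv, norm_zero] at this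
      exact norm_le_zero_iff.mp this
    set g0 : LinearMap.range (Stmt13Aux.Tmap x) →ₗ[ℂ] ℂ :=
      ((LinearMap.ker (Stmt13Aux.Tmap x)).liftQ (Stmt13Aux.Smap l) hker) ∘ₗ
        (Stmt13Aux.Tmap x).quotKerEquivRange.symm.toLinearMap with hg0_def
    have hg0 : ∀ v, g0 ⟨Stmt13Aux.Tmap x v, LinearMap.mem_range_self _ v⟩
        = Stmt13Aux.Smap l v := by
      intro v
      rw [hg0_def]
      simp only [LinearMap.coe_comp, Function.comp_apply, LinearEquiv.coe_coe]
      rw [(Stmt13Aux.Tmap x).quotKerEquivRange_symm_apply_image v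
        (LinearMap.mem_range_self _ v), Submodule.mkQ_apply, Submodule.liftQ_apply]
    have hg0bound : ∀ y : LinearMap.range (Stmt13Aux.Tmap x), ‖g0 y‖ ≤ 1 * ‖(y : A)‖ := by
      rintro ⟨y, v, rfl⟩
      have e : (⟨Stmt13Aux.Tmap x v, ⟨v, rfl⟩⟩ : LinearMap.range (Stmt13Aux.Tmap x))
          = ⟨Stmt13Aux.Tmap x v, LinearMap.mem_range_self _ v⟩ := rfl
      rw [one_mul, e, hg0 v]
      exact key v
    set g1 := g0.mkContinuous 1 hg0bound with hg1_def
    have hg1norm : ‖g1‖ ≤ 1 := g0.mkContinuous_norm_le zero_le_one hg0bound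
    obtain ⟨g, hg, hgnorm⟩ := exists_extension_norm_eq (LinearMap.range (Stmt13Aux.Tmap x)) g1
    have hgle : ‖g‖ ≤ 1 := hgnorm ▸ hg1norm
    have hval : ∀ v, g (Stmt13Aux.Tmap x v) = Stmt13Aux.Smap l v := by
      intro v
      have h2 := hg ⟨Stmt13Aux.Tmap x v, LinearMap.mem_range_self _ v⟩
      rw [h2, hg1_def]
      exact hg0 v
    have hone : g 1 = 1 := by
      have e1 : Stmt13Aux.Tmap x ((1, 0, 0) : ℂ × (Fin n → ℂ) × (Fin n → ℂ)) = 1 := by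
        simp [Stmt13Aux.Tmap]
      have e2 : Stmt13Aux.Smap l ((1, 0, 0) : ℂ × (Fin n → ℂ) × (Fin n → ℂ)) = 1 := by
        simp [Stmt13Aux.Smap]
      have := hval (1, 0, 0)
      rw [e1, e2] at this
      exact this
    have hxi : ∀ i, g (x i) = l i := by
      intro i
      have e1 : Stmt13Aux.Tmap x ((0, Pi.single i 1, 0) : ℂ × (Fin n → ℂ) × (Fin n → ℂ))
          = x i := by
        simp [Stmt13Aux.Tmap, Pi.single_apply, ite_smul]
      have e2 : Stmt13Aux.Smap l ((0, Pi.single i 1, 0) : ℂ × (Fin n → ℂ) × (Fin n → ℂ))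
          = l i := by
        simp [Stmt13Aux.Smap, Pi.single_apply, ite_mul]
      have := hval (0, Pi.single i 1, 0)
      rw [e1, e2] at this
      exact this
    refine ⟨(g : A →ₗ[ℂ] ℂ), hone, ?_, hxi⟩
    rintro z ⟨w, rfl⟩
    exact Stmt13Aux.pos_of_norm_le_one g hone hgle w
  · rintro ⟨φ, hφ1, hpos, hφx⟩ a₀ a b _ _ _
    letI := CStarAlgebra.spectralOrder A
    haveI := CStarAlgebra.spectralOrderedRing A
    have hstar : ∀ i, φ (star (x i)) = (starRingEnd ℂ) (l i) := fun i => by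
      rw [Stmt13Aux.map_star_eq φ hφ1 hpos, hφx i]
    have hval : φ (a₀ • (1 : A) + ∑ i, a i • x i + ∑ i, b i • star (x i))
        = a₀ + ∑ i, a i * l i + ∑ i, b i * (starRingEnd ℂ) (l i) := by
      rw [map_add, map_add, map_smul, hφ1, map_sum, map_sum]
      simp only [map_smul, hφx, hstar, smul_eq_mul, mul_one]
    rw [← hval]
    exact Stmt13Aux.norm_map_le φ hφ1 hpos _
end

section
/- For every n ≥ 1 and every δ > 0 there exists ε > 0 such that the following holds: for every unital C*-algebra A and every positive element X of the C*-algebra Mₙ(A) of n×n matrices over A satisfying ‖X‖ ≤ 1 and ‖Σᵢ Xᵢᵢ − 1‖ ≤ ε, there exists a positive element X' of Mₙ(A) with Σᵢ X'ᵢᵢ = 1 and ‖X − X'‖ ≤ δ. -/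
universe u


def WA {A : Type u} (_φ : A → ℝ) : Type u := A

section WAinst
variable {A : Type u} [CStarAlgebra A] {φ : A → ℝ}
instance : Ring (WA φ) := inferInstanceAs (Ring A)
instance : StarRing (WA φ) := inferInstanceAs (StarRing A)
instance : Algebra ℂ (WA φ) := inferInstanceAs (Algebra ℂ A)
end WAinst

open scoped ENNReal NNReal in
open UniformSpace in
theorem my_cstar_norm_le {A : Type u} [CStarAlgebra A] [Nontrivial A] (φ : A → ℝ)
    (h0 : ∀ x, φ x = 0 ↔ x = 0) (hadd : ∀ x y, φ (x + y) ≤ φ x + φ y)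
    (hsmul : ∀ (c : ℂ) (x), φ (c • x) = ‖c‖ * φ x)
    (hmul : ∀ x y, φ (x * y) ≤ φ x * φ y)
    (hstar : ∀ x, φ (star x * x) = φ x ^ 2)
    (b : A) (hb : IsSelfAdjoint b) : φ b ≤ ‖b‖ := by
  classical
  have hzero : φ 0 = 0 := (h0 0).mpr rfl
  have hneg : ∀ x : A, φ (-x) = φ x := by
    intro x
    have := hsmul (-1) x
    simpa using this
  letI R : Ring (WA φ) := inferInstance
  letI Ngrp : NormedAddCommGroup (WA φ) := AddGroupNorm.toNormedAddCommGroup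
    { toFun := fun x => φ x
      map_zero' := hzero
      add_le' := hadd
      neg' := hneg
      eq_zero_of_map_eq_zero' := fun x hx => (h0 x).1 hx }
  letI : NormedRing (WA φ) :=
    { R, Ngrp with
      dist_eq := Ngrp.dist_eq
      norm_mul_le := hmul }
  letI : NormedAlgebra ℂ (WA φ) :=
    { (inferInstance : Algebra ℂ (WA φ)) with
      norm_smul_le := fun c x => le_of_eq (hsmul c x) }
  letI : NormedAlgebra ℂ (Completion (WA φ)) :=
    { (inferInstance : Algebra ℂ (Completion (WA φ))) with
      norm_smul_le := fun c x => norm_smul_le c x }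
  set B := Completion (WA φ) with hB
  let ψ : WA φ →ₐ[ℂ] B := AlgHom.mk' (Completion.coeRingHom)
    (fun c x => (Completion.coe_smul c x))
  have hψ : ∀ x : WA φ, ψ x = (x : B) := fun x => rfl
  have hcoe : ∀ x : WA φ, ‖ψ x‖₊ = ‖x‖₊ := fun x => Completion.nnnorm_coe x
  have hWnorm : ∀ x : WA φ, ‖x‖ = φ x := fun x => rfl
  have hpow : ∀ k : ℕ, φ (b ^ 2 ^ k) = φ b ^ 2 ^ k := by
    intro k
    induction k with
    | zero => simp
    | succ k ih =>
      have hsa : star (b ^ 2 ^ k) = b ^ 2 ^ k := (hb.pow (2 ^ k)).star_eq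
      have : b ^ 2 ^ (k + 1) = star (b ^ 2 ^ k) * b ^ 2 ^ k := by
        rw [hsa, ← pow_add, pow_succ, mul_two]
      rw [this, hstar, ih, ← pow_mul, pow_succ]
  have hnnpow : ∀ k : ℕ, ‖(ψ b) ^ 2 ^ k‖₊ = ‖ψ b‖₊ ^ 2 ^ k := by
    intro k
    have h1 : (ψ b) ^ 2 ^ k = ψ (b ^ 2 ^ k) := (map_pow ψ b _).symm
    simp only [h1, hcoe]
    ext
    push_cast [coe_nnnorm, hWnorm]
    exact (hpow k).trans (congrArg (· ^ 2 ^ k) (congrArg NNReal.toReal (hcoe b)).symm)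
  have gel := spectrum.pow_nnnorm_pow_one_div_tendsto_nhds_spectralRadius (ψ b)
  have hmono : Filter.Tendsto (fun k : ℕ => 2 ^ k) Filter.atTop Filter.atTop :=
    tendsto_pow_atTop_atTop_of_one_lt one_lt_two
  have gel2 := gel.comp hmono
  have hconst : ((fun n : ℕ => (‖(ψ b) ^ n‖₊ : ℝ≥0∞) ^ (1 / n : ℝ)) ∘ fun k : ℕ => 2 ^ k)
      = fun _ => (‖ψ b‖₊ : ℝ≥0∞) := by
    funext k
    simp only [Function.comp_apply, hnnpow k]
    rw [ENNReal.coe_pow, ← ENNReal.rpow_natCast, ← ENNReal.rpow_mul]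
    norm_num
  rw [hconst] at gel2
  have hrad : spectralRadius ℂ (ψ b) = (‖ψ b‖₊ : ℝ≥0∞) :=
    tendsto_nhds_unique gel2 tendsto_const_nhds
  have hsub : spectrum ℂ (ψ b) ⊆ spectrum ℂ b := AlgHom.spectrum_apply_subset ψ b
  have hle : spectralRadius ℂ (ψ b) ≤ (‖b‖₊ : ℝ≥0∞) := by
    refine iSup₂_le fun k hk => ?_
    exact mod_cast spectrum.norm_le_norm_of_mem (show k ∈ spectrum ℂ b from hsub hk)
  rw [hrad, ENNReal.coe_le_coe] at hle
  have : ‖ψ b‖ ≤ ‖b‖ := hle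
  exact (congrArg NNReal.toReal (hcoe b)).symm.trans_le this

/-- `N` is a C*-norm on the matrix algebra `Matrix ι ι A`: a (complex-homogeneous)
norm which is submultiplicative and satisfies the C*-identity.  Such a norm is unique,
so this characterizes "the" C*-norm of `Mₙ(A)`. -/
def IsCStarNorm {A : Type u} [Ring A] [StarRing A] [Algebra ℂ A]
    {ι : Type} [Fintype ι] (N : Matrix ι ι A → ℝ) : Prop :=
  (∀ x, N x = 0 ↔ x = 0) ∧
  (∀ x y, N (x + y) ≤ N x + N y) ∧
  (∀ (c : ℂ) (x), N (c • x) = ‖c‖ * N x) ∧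
  (∀ x y, N (x * y) ≤ N x * N y) ∧
  (∀ x, N (star x * x) = N x ^ 2)

set_option maxHeartbeats 2000000 in
/-- for every `n ≥ 1` and `δ > 0` there is `ε > 0` such that for every
unital C*-algebra `A` and every positive `X ∈ Mₙ(A)` with `‖X‖ ≤ 1` and
`‖Σᵢ Xᵢᵢ - 1‖ ≤ ε`, there is a positive `X' ∈ Mₙ(A)` with `Σᵢ X'ᵢᵢ = 1` and
`‖X - X'‖ ≤ δ`.  Positivity in `Mₙ(A)` is witnessed by a `w* w` decomposition and the
C*-norm of `Mₙ(A)` is the unique norm satisfying `IsCStarNorm`. -/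
theorem stmt_14 (n : ℕ) (hn : 1 ≤ n) (δ : ℝ) (hδ : 0 < δ) :
    ∃ ε : ℝ, 0 < ε ∧
      ∀ (A : Type u) [CStarAlgebra A],
        ∀ N : Matrix (Fin n) (Fin n) A → ℝ, IsCStarNorm N →
        ∀ X : Matrix (Fin n) (Fin n) A,
          (∃ w : Matrix (Fin n) (Fin n) A, X = star w * w) → N X ≤ 1 → ‖(∑ i, X i i) - 1‖ ≤ ε →
          ∃ X' : Matrix (Fin n) (Fin n) A,
            (∃ w : Matrix (Fin n) (Fin n) A, X' = star w * w) ∧ (∑ i, X' i i) = 1 ∧ N (X - X') ≤ δ := by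
  classical
  set ε : ℝ := min (δ / 6) 4⁻¹ with hε
  have hε0 : 0 < ε := by positivity
  have hε4 : ε ≤ 4⁻¹ := min_le_right _ _
  have hε6 : ε ≤ δ / 6 := min_le_left _ _
  refine ⟨ε, hε0, ?_⟩
  intro A _ N hN X hXpos hX1 htr
  obtain ⟨h0, hadd, hsmul, hmul, hstar⟩ := hN
  obtain ⟨w, hw⟩ := hXpos
  haveI : Nonempty (Fin n) := ⟨⟨0, hn⟩⟩
  rcases subsingleton_or_nontrivial A with hA | hA
  · refine ⟨X, ⟨w, hw⟩, Subsingleton.elim _ _, ?_⟩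
    rw [sub_self, (h0 0).mpr rfl]
    exact hδ.le
  -- basic facts about N
  have hN0 : N 0 = 0 := (h0 0).mpr rfl
  have hNneg : ∀ x, N (-x) = N x := fun x => by simpa using hsmul (-1) x
  have hNnonneg : ∀ x, 0 ≤ N x := fun x => by
    have h1 := hadd x (-x)
    rw [add_neg_cancel, hN0, hNneg] at h1
    linarith
  have hMone : (1 : Matrix (Fin n) (Fin n) A) ≠ 0 := by
    intro h
    have := congrFun (congrFun h ⟨0, hn⟩) ⟨0, hn⟩
    rw [Matrix.one_apply_eq] at this
    exact one_ne_zero this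
  have hNone : N 1 = 1 := by
    have h1 : N 1 = N 1 ^ 2 := by simpa using hstar 1
    have h2 : N 1 ≠ 0 := fun h => hMone ((h0 1).mp h)
    have h3 : N 1 * (N 1 - 1) = 0 := by rw [mul_sub, mul_one, ← sq]; linarith [h1]
    rcases mul_eq_zero.mp h3 with h | h
    · exact absurd h h2
    · linarith
  -- the auxiliary norm on A
  set φ : A → ℝ := fun a => N (Matrix.diagonal fun _ => a) with hφ
  have hφ_le : ∀ b : A, IsSelfAdjoint b → φ b ≤ ‖b‖ := by
    intro b hb
    refine my_cstar_norm_le φ ?_ ?_ ?_ ?_ ?_ b hb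
    · intro x
      rw [hφ]
      refine (h0 _).trans ⟨fun h => ?_, fun h => by simp [h]⟩
      have := Matrix.diagonal_injective (h.trans (Matrix.diagonal_zero).symm)
      exact congrFun this ⟨0, hn⟩
    · intro x y
      show N (Matrix.diagonal fun _ => x + y) ≤ N (Matrix.diagonal fun _ => x) + N (Matrix.diagonal fun _ => y)
      rw [show (Matrix.diagonal fun _ : Fin n => x + y)
          = (Matrix.diagonal fun _ => x) + (Matrix.diagonal fun _ => y) from
        (Matrix.diagonal_add _ _).symm]
      exact hadd _ _
    · intro c x
      show N (Matrix.diagonal fun _ => c • x) = ‖c‖ * N (Matrix.diagonal fun _ => x)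
      rw [show (Matrix.diagonal fun _ : Fin n => c • x)
          = c • (Matrix.diagonal fun _ => x) from (Matrix.diagonal_smul c (fun _ => x))]
      exact hsmul _ _
    · intro x y
      show N (Matrix.diagonal fun _ => x * y) ≤ N (Matrix.diagonal fun _ => x) * N (Matrix.diagonal fun _ => y)
      rw [show (Matrix.diagonal fun _ : Fin n => x * y)
          = (Matrix.diagonal fun _ => x) * (Matrix.diagonal fun _ => y) from
        (Matrix.diagonal_mul_diagonal _ _).symm]
      exact hmul _ _
    · intro x
      show N (Matrix.diagonal fun _ => star x * x) = N (Matrix.diagonal fun _ => x) ^ 2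
      have hst : star (Matrix.diagonal fun _ : Fin n => x) = Matrix.diagonal fun _ => star x := by
        rw [Matrix.star_eq_conjTranspose, Matrix.diagonal_conjTranspose]
        rfl
      rw [show (Matrix.diagonal fun _ : Fin n => star x * x)
          = star (Matrix.diagonal fun _ => x) * (Matrix.diagonal fun _ => x) from by
        rw [hst, Matrix.diagonal_mul_diagonal]]
      exact hstar _
  -- the trace and its functional calculus
  set t : A := ∑ i, X i i with ht
  have hXsa : star X = X := by rw [hw, star_mul, star_star]
  have ht_sa : IsSelfAdjoint t := by
    show star t = t
    rw [ht, star_sum]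
    exact Finset.sum_congr rfl fun i _ => by rw [← Matrix.star_apply, hXsa]
  have hspec : ∀ x ∈ spectrum ℝ t, |x - 1| ≤ ε := by
    intro x hx
    have hx1 : x - 1 ∈ spectrum ℝ (t - 1) := by
      rw [spectrum.mem_iff] at hx ⊢
      have : algebraMap ℝ A (x - 1) - (t - 1) = algebraMap ℝ A x - t := by
        rw [map_sub, map_one]; abel
      rw [this]
      exact hx
    calc |x - 1| = ‖x - 1‖ := (Real.norm_eq_abs _).symm
      _ ≤ ‖t - 1‖ := spectrum.norm_le_norm_of_mem hx1
      _ ≤ ε := htr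
  have hspec' : ∀ x ∈ spectrum ℝ t, (3/4 : ℝ) ≤ x ∧ x ≤ 5/4 := by
    intro x hx
    have h := hspec x hx
    rw [abs_le] at h
    constructor <;> [linarith [hε4, h.1]; linarith [hε4, h.2]]
  set f : ℝ → ℝ := fun x => (Real.sqrt x)⁻¹ with hf
  have hf_cont : ContinuousOn f (spectrum ℝ t) := by
    apply ContinuousOn.inv₀ Real.continuous_sqrt.continuousOn
    intro x hx
    have := (hspec' x hx).1
    exact Real.sqrt_ne_zero'.mpr (by linarith)
  set s : A := cfc f t with hs
  have hs_sa : IsSelfAdjoint s := cfc_predicate f t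
  set g : ℝ → ℝ := fun x => f x * id x with hg
  have hfi_cont : ContinuousOn g (spectrum ℝ t) :=
    hf_cont.mul continuousOn_id
  have hsts : s * t * s = 1 := by
    have e1 : s * t * s = cfc (fun x : ℝ => g x * f x) t := by
      conv_lhs => rw [← cfc_id ℝ t ht_sa]
      rw [hs, ← cfc_mul f _ t hf_cont continuousOn_id, ← cfc_mul g f t hfi_cont hf_cont]
    rw [e1, cfc_congr (g := fun _ : ℝ => 1) ?_, cfc_const_one ℝ t]
    intro x hx
    have h34 := (hspec' x hx).1
    have hx0 : (0:ℝ) < x := by linarith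
    have hsq : Real.sqrt x * Real.sqrt x = x := Real.mul_self_sqrt hx0.le
    have hsne : Real.sqrt x ≠ 0 := Real.sqrt_ne_zero'.mpr hx0
    show (Real.sqrt x)⁻¹ * id x * (Real.sqrt x)⁻¹ = 1
    simp only [id]
    rw [← hsq]
    field_simp
    rw [Real.sqrt_sq (Real.sqrt_nonneg x)]
  have hs1 : ‖s - 1‖ ≤ 2 * ε := by
    have e3 : cfc (fun x : ℝ => f x - 1) t = s - 1 := by
      rw [cfc_sub _ _ t hf_cont continuousOn_const, cfc_const_one ℝ t, ← hs]
    rw [← e3]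
    refine norm_cfc_le (by positivity) fun x hx => ?_
    obtain ⟨hx1, hx2⟩ := hspec' x hx
    have hd := hspec x hx
    rw [abs_le] at hd
    set y := Real.sqrt x with hy'
    have hx0 : (0:ℝ) < x := by linarith
    have hyy : y * y = x := Real.mul_self_sqrt hx0.le
    have hy0 : 0 < y := Real.sqrt_pos.mpr hx0
    have hyhalf : 1/2 ≤ y := by nlinarith
    have hz0 : 0 < y⁻¹ := inv_pos.mpr hy0
    have hinv : y * y⁻¹ = 1 := mul_inv_cancel₀ hy0.ne'
    have hz2 : y⁻¹ ≤ 2 := by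
      nlinarith [mul_nonneg (by linarith : (0:ℝ) ≤ y - 1/2) hz0.le, hinv]
    have key1 : 1 - y⁻¹ ≤ 2 * ε := by
      have e : 1 - y⁻¹ = (y - 1) * y⁻¹ := by field_simp
      rcases le_total y 1 with h | h
      · nlinarith [mul_nonneg (by linarith : (0:ℝ) ≤ 1 - y) hz0.le, e, hε0]
      · have h2 : y - 1 ≤ ε := by nlinarith [hyy, hd.2, sq_nonneg (y-1)]
        have h3 : (y - 1) * y⁻¹ ≤ ε * 2 :=
          mul_le_mul h2 hz2 hz0.le (by linarith [hε0])
        linarith [e]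
    have key2 : y⁻¹ - 1 ≤ 2 * ε := by
      have e : y⁻¹ - 1 = (1 - y) * y⁻¹ := by field_simp
      rcases le_total 1 y with h | h
      · nlinarith [mul_nonneg (by linarith : (0:ℝ) ≤ y - 1) hz0.le, e, hε0]
      · have h2 : 1 - y ≤ ε := by
          nlinarith [hyy, hd.1, mul_nonneg (by linarith : (0:ℝ) ≤ 1 - y) hy0.le]
        have h3 : (1 - y) * y⁻¹ ≤ ε * 2 :=
          mul_le_mul h2 hz2 hz0.le (by linarith [hε0])
        linarith [e]
    show ‖(Real.sqrt x)⁻¹ - 1‖ ≤ 2 * ε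
    rw [Real.norm_eq_abs, abs_le, ← hy']
    constructor
    · linarith [key1]
    · linarith [key2]
  have hsnorm : ‖s‖ ≤ 3/2 := by
    have : ‖s‖ ≤ ‖s - 1‖ + ‖(1:A)‖ := by
      simpa using norm_add_le (s - 1) (1 : A)
    rw [norm_one] at this
    linarith [hε4]
  -- the corrected matrix
  set D : Matrix (Fin n) (Fin n) A := Matrix.diagonal (fun _ => s) with hD
  have hDstar : star D = D := by
    rw [hD, Matrix.star_eq_conjTranspose, Matrix.diagonal_conjTranspose]
    exact congrArg _ (funext fun _ => hs_sa.star_eq)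
  refine ⟨D * X * D, ⟨w * D, ?_⟩, ?_, ?_⟩
  · rw [star_mul, hDstar, hw]
    simp [mul_assoc]
  · have happ : ∀ i, (D * X * D) i i = s * X i i * s := by
      intro i
      rw [hD, Matrix.mul_diagonal, Matrix.diagonal_mul]
    calc ∑ i, (D * X * D) i i = ∑ i, s * X i i * s :=
          Finset.sum_congr rfl fun i _ => happ i
      _ = s * (∑ i, X i i) * s := by rw [Finset.mul_sum, Finset.sum_mul]
      _ = 1 := by rw [← ht]; exact hsts
  · have key : X - D * X * D = (1 - D) * X + D * X * (1 - D) := by noncomm_ring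
    have h1D : N (1 - D) ≤ 2 * ε := by
      have e4 : (1 : Matrix (Fin n) (Fin n) A) - D = Matrix.diagonal fun _ => 1 - s := by
        rw [hD, ← Matrix.diagonal_one, Matrix.diagonal_sub]
      rw [e4]
      calc N (Matrix.diagonal fun _ : Fin n => 1 - s) = φ (1 - s) := rfl
        _ ≤ ‖(1 : A) - s‖ := hφ_le _ ((IsSelfAdjoint.one (R := A)).sub hs_sa)
        _ = ‖s - 1‖ := norm_sub_rev _ _
        _ ≤ 2 * ε := hs1
    have hDN : N D ≤ 3/2 := by
      calc N D = φ s := rfl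
        _ ≤ ‖s‖ := hφ_le s hs_sa
        _ ≤ 3/2 := hsnorm
    have hc1 : N (X - D * X * D) ≤ N ((1 - D) * X) + N (D * X * (1 - D)) := by
      rw [key]; exact hadd _ _
    have hc2 : N ((1 - D) * X) ≤ N (1 - D) * N X := hmul _ _
    have hc3 : N (D * X * (1 - D)) ≤ N (D * X) * N (1 - D) := hmul _ _
    have hc4 : N (D * X) ≤ N D * N X := hmul _ _
    nlinarith [hc1, hc2, hc3, hc4, hX1, h1D, hDN, hε0, hε6, hδ,
      hNnonneg X, hNnonneg (1 - D), hNnonneg (D * X), hNnonneg D,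
      hNnonneg ((1 - D) * X), hNnonneg (D * X * (1 - D))]
end

section
/- Let E = { x ∈ M₃(ℂ) : x₁₃ = 0 and x₃₁ = 0 }. There is no completely positive linear map p : M₃(ℂ) → M₃(ℂ) such that p(x) ∈ E for every x ∈ M₃(ℂ) and p(x) = x for every x ∈ E. In other words, there is no completely positive projection of M₃(ℂ) onto E. -/
open scoped ComplexOrder

/-- there is no completely positive linear projection of `M₃(ℂ)` onto the
operator system `E = { x ∈ M₃(ℂ) : x₁₃ = x₃₁ = 0 }`. -/
theorem stmt_16 :
    ¬ ∃ p : Matrix (Fin 3) (Fin 3) ℂ →ₗ[ℂ] Matrix (Fin 3) (Fin 3) ℂ,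
      IsCompletelyPositiveMat (⇑p) ∧
      (∀ x, p x 0 2 = 0 ∧ p x 2 0 = 0) ∧
      (∀ x : Matrix (Fin 3) (Fin 3) ℂ, x 0 2 = 0 → x 2 0 = 0 → p x = x) := by
  rintro ⟨p, hcp, hE, hfix⟩
  -- the rank-one PSD matrix x = u u* with u supported on the "diagonal" indices
  set u : Fin 3 × Fin 3 → ℂ := fun ik => if ik.1 = ik.2 then 1 else 0 with hu
  set A : Matrix (Fin 3 × Fin 3) Unit ℂ := Matrix.of fun ik _ => u ik with hA
  set x : Matrix (Fin 3 × Fin 3) (Fin 3 × Fin 3) ℂ := A * A.conjTranspose with hxdef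
  have hx : x.PosSemidef := Matrix.posSemidef_self_mul_conjTranspose A
  have hY := hcp 3 x hx
  -- the blocks of x are the standard matrix units
  have hblock : ∀ i j : Fin 3,
      (Matrix.of fun a b => x (i, a) (j, b)) = Matrix.single i j (1 : ℂ) := by
    intro i j
    ext a b
    simp only [hxdef, hA, Matrix.mul_apply, Matrix.conjTranspose_apply, Matrix.of_apply,
      Finset.univ_unique, Finset.sum_singleton, hu, Matrix.single]
    by_cases h1 : i = a <;> by_cases h2 : j = b <;>
      simp [h1, h2, eq_comm, apply_ite (starRingEnd ℂ)] <;>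
      tauto
  have key : ∀ i j : Fin 3, matAmp 3 (⇑p) x (i, i) (j, j)
      = p (Matrix.single i j (1 : ℂ)) i j := by
    intro i j
    simp only [matAmp, Matrix.of_apply]
    rw [hblock]
  -- values of p on matrix units
  have hfix' : ∀ i j : Fin 3, ¬(i = 0 ∧ j = 2) → ¬(i = 2 ∧ j = 0) →
      p (Matrix.single i j (1 : ℂ)) i j = 1 := by
    intro i j h1 h2
    rw [hfix _ (by simp [Matrix.single]; tauto)
      (by simp [Matrix.single]; tauto)]
    simp [Matrix.single]
  have h02 : p (Matrix.single 0 2 (1 : ℂ)) 0 2 = 0 := (hE _).1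
  have h20 : p (Matrix.single 2 0 (1 : ℂ)) 2 0 = 0 := (hE _).2
  -- test vector
  set w : Fin 3 × Fin 3 → ℂ := fun ik => if ik.1 = ik.2 then ![1, -1, 1] ik.1 else 0 with hw
  have h0 := hY.dotProduct_mulVec_nonneg w
  rw [dotProduct, Fintype.sum_prod_type] at h0
  simp only [Matrix.mulVec, dotProduct, Fintype.sum_prod_type, hw,
    Fin.sum_univ_three, Pi.star_apply] at h0
  simp only [show ((0:Fin 3) = 2) = False by simp, show ((2:Fin 3) = 0) = False by simp,
    show ((1:Fin 3) = 2) = False by simp, show ((2:Fin 3) = 1) = False by simp,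
    if_false, add_zero, zero_add, map_zero, mul_zero, zero_mul, neg_zero] at h0
  rw [key 0 0, key 0 1, key 0 2, key 1 0, key 1 1, key 1 2, key 2 0, key 2 1, key 2 2] at h0
  rw [hfix' 0 0 (by simp) (by simp), hfix' 0 1 (by simp) (by simp),
    hfix' 1 0 (by simp) (by simp), hfix' 1 1 (by simp) (by simp),
    hfix' 1 2 (by simp) (by simp), hfix' 2 1 (by simp) (by simp),
    hfix' 2 2 (by simp) (by simp), h02, h20] at h0
  norm_num [show ((0:Fin 3) = 1) = False by simp, show ((1:Fin 3) = 0) = False by simp,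
    Complex.le_def, Matrix.cons_val_two, Matrix.tail_cons, Matrix.head_cons] at h0
end
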